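/- Let m ≥ 1, let V ⊆ ℝ^m be open, and let x, q : V → ℝ^m be smooth maps such that x is a smooth diffeomorphism from V onto a convex open set U ⊆ ℝ^m. Assume that for every y ∈ V and all u, w ∈ ℝ^m one has ⟨Dq(y)u, Dx(y)w⟩ = ⟨Dq(y)w, Dx(y)u⟩ (the condition that the embedding ι(y) = (x(y), q(y)) into T*ℝ^m = ℝ^m × ℝ^m pulls the canonical symplectic form Σ_i dq_i ∧ dx^i back to zero). Then there exists a smooth function ψ : U → ℝ such that q(y) = ∇ψ(x(y)) for all y ∈ V; that is, the image of ι is the graph of the differential dψ. -/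

import Mathlib

open scoped RealInnerProductSpace
open Set Metric MeasureTheory intervalIntegral
open scoped Interval
set_option autoImplicit false
set_option maxHeartbeats 1000000

variable {m : ℕ}

theorem poincare1form {U : Set (EuclideanSpace ℝ (Fin m))} (hU : IsOpen U) (hUconv : Convex ℝ U)
    {p : EuclideanSpace ℝ (Fin m) → EuclideanSpace ℝ (Fin m)}
    (hp : ContDiffOn ℝ (⊤ : ℕ∞) p U)
    (hsymm : ∀ z ∈ U, ∀ u w : EuclideanSpace ℝ (Fin m),
      ⟪fderiv ℝ p z u, w⟫ = ⟪fderiv ℝ p z w, u⟫)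
    {a : EuclideanSpace ℝ (Fin m)} (ha : a ∈ U) :
    ∀ z ∈ U, HasGradientAt (fun z => ∫ t in (0:ℝ)..1, ⟪p (a + t • (z - a)), z - a⟫) (p z) z := by
  have h1top : (1 : WithTop ℕ∞) ≤ ((⊤ : ℕ∞) : WithTop ℕ∞) := by exact_mod_cast le_top
  intro z₀ hz₀
  set c : EuclideanSpace ℝ (Fin m) → ℝ → EuclideanSpace ℝ (Fin m) :=
    fun z t => a + t • (z - a) with hc
  have hcmem : ∀ z ∈ U, ∀ t ∈ Icc (0:ℝ) 1, c z t ∈ U := by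
    intro z hz t ht
    have := hUconv ha hz (by linarith [ht.2] : (0:ℝ) ≤ 1 - t) ht.1 (by ring)
    convert this using 1
    simp only [hc]
    module
  obtain ⟨ε, εpos, hball⟩ := Metric.isOpen_iff.1 hU z₀ hz₀
  set ε' : ℝ := ε / 2 with hε'
  have ε'pos : 0 < ε' := by positivity
  have hcb : closedBall z₀ ε' ⊆ U := (closedBall_subset_ball (by linarith)).trans hball
  set K : Set (EuclideanSpace ℝ (Fin m)) :=
    (fun tz : ℝ × EuclideanSpace ℝ (Fin m) => c tz.2 tz.1) '' (Icc (0:ℝ) 1 ×ˢ closedBall z₀ ε')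
    with hK
  have hKcomp : IsCompact K := by
    apply (isCompact_Icc.prod (isCompact_closedBall z₀ ε')).image
    fun_prop
  have hKU : K ⊆ U := by
    rintro _ ⟨⟨t, z⟩, ⟨ht, hz⟩, rfl⟩
    exact hcmem z (hcb hz) t ht
  have hpc : ContinuousOn p U := hp.continuousOn
  have hdpc : ContinuousOn (fderiv ℝ p) U := hp.continuousOn_fderiv_of_isOpen hU h1top
  obtain ⟨M₁, hM₁⟩ := hKcomp.exists_bound_of_continuousOn (hpc.mono hKU)
  obtain ⟨M₂, hM₂⟩ := hKcomp.exists_bound_of_continuousOn (hdpc.mono hKU)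
  have haK : a ∈ K := ⟨(0, z₀), ⟨⟨le_rfl, zero_le_one⟩, mem_closedBall_self ε'pos.le⟩, by simp [hc]⟩
  have hM₂0 : 0 ≤ M₂ := (norm_nonneg _).trans (hM₂ a haK)
  have hpd : ∀ w ∈ U, HasFDerivAt p (fderiv ℝ p w) w := fun w hw =>
    ((hp.differentiableOn (by simp)).differentiableAt (hU.mem_nhds hw)).hasFDerivAt
  set F : EuclideanSpace ℝ (Fin m) → ℝ → ℝ := fun z t => ⟪p (c z t), z - a⟫ with hF
  set F' : EuclideanSpace ℝ (Fin m) → ℝ → (EuclideanSpace ℝ (Fin m) →L[ℝ] ℝ) := fun z t =>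
    t • ((innerSL ℝ (z - a)).comp (fderiv ℝ p (c z t))) + innerSL ℝ (p (c z t)) with hF'
  have hF'apply : ∀ z t v, F' z t v = t * ⟪z - a, fderiv ℝ p (c z t) v⟫ + ⟪p (c z t), v⟫ := by
    intro z t v
    simp only [hF', ContinuousLinearMap.add_apply, ContinuousLinearMap.smul_apply,
      ContinuousLinearMap.comp_apply, innerSL_apply_apply, smul_eq_mul]
  have hccont : ∀ z, Continuous (fun t : ℝ => c z t) := by intro z; fun_prop
  have hFcont : ∀ z ∈ closedBall z₀ ε', ContinuousOn (F z) (Icc (0:ℝ) 1) := by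
    intro z hz
    exact (hpc.comp (hccont z).continuousOn (fun t ht => hcmem z (hcb hz) t ht)).inner
      continuousOn_const
  have hF'cont : ContinuousOn (F' z₀) (Icc (0:ℝ) 1) := by
    apply ContinuousOn.add
    · exact continuousOn_id.smul (continuousOn_const.clm_comp
        (hdpc.comp (hccont z₀).continuousOn (fun t ht => hcmem z₀ hz₀ t ht)))
    · exact (innerSL ℝ).continuous.comp_continuousOn
        (hpc.comp (hccont z₀).continuousOn (fun t ht => hcmem z₀ hz₀ t ht))
  -- derivative in z
  have hFderiv : ∀ t ∈ Icc (0:ℝ) 1, ∀ z ∈ ball z₀ ε', HasFDerivAt (fun z => F z t) (F' z t) z := by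
    intro t ht z hz
    have hczU : c z t ∈ U := hcmem z (hcb (ball_subset_closedBall hz)) t ht
    have h1 : HasFDerivAt (fun z => c z t) (t • ContinuousLinearMap.id ℝ _) z := by
      simpa [hc] using (((hasFDerivAt_id z).sub_const a).const_smul t).const_add a
    have h2 : HasFDerivAt (fun z => p (c z t)) ((fderiv ℝ p (c z t)).comp
        (t • ContinuousLinearMap.id ℝ _)) z := (hpd _ hczU).comp z h1
    have h3 : HasFDerivAt (fun z : EuclideanSpace ℝ (Fin m) => z - a)
        (ContinuousLinearMap.id ℝ _) z := by simpa using (hasFDerivAt_id z).sub_const a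
    have h4 := h2.inner ℝ h3
    refine h4.congr_fderiv ?_
    ext v
    simp only [hF'apply, fderivInnerCLM_apply, ContinuousLinearMap.comp_apply,
      ContinuousLinearMap.prod_apply, ContinuousLinearMap.smul_apply,
      ContinuousLinearMap.id_apply, ContinuousLinearMap.map_smul, real_inner_smul_right,
      smul_eq_mul]
    rw [real_inner_smul_left, real_inner_comm ((fderiv ℝ p (c z t)) v)]
    ring
  -- bound
  set C : ℝ := M₂ * (‖z₀ - a‖ + ε') + M₁ with hC
  have hIsub : Ι (0:ℝ) 1 ⊆ Icc (0:ℝ) 1 := by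
    rw [Set.uIoc_of_le zero_le_one]; exact Ioc_subset_Icc_self
  have hbound : ∀ t ∈ Ι (0:ℝ) 1, ∀ z ∈ ball z₀ ε', ‖F' z t‖ ≤ C := by
    intro t ht z hz
    have ht' : t ∈ Icc (0:ℝ) 1 := hIsub ht
    have hcK : c z t ∈ K := ⟨(t, z), ⟨ht', ball_subset_closedBall hz⟩, rfl⟩
    have hza : ‖z - a‖ ≤ ‖z₀ - a‖ + ε' := by
      calc ‖z - a‖ = ‖(z - z₀) + (z₀ - a)‖ := by abel_nf
        _ ≤ ‖z - z₀‖ + ‖z₀ - a‖ := norm_add_le _ _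
        _ ≤ ε' + ‖z₀ - a‖ := by
            have := mem_ball_iff_norm.1 hz
            linarith
        _ = ‖z₀ - a‖ + ε' := by ring
    have h1 : ‖F' z t‖ ≤ |t| * (‖innerSL ℝ (z - a)‖ * ‖fderiv ℝ p (c z t)‖) + ‖innerSL ℝ (p (c z t))‖ := by
      refine (norm_add_le _ _).trans (add_le_add ?_ le_rfl)
      have hns : ‖t • ((innerSL ℝ (z - a)).comp (fderiv ℝ p (c z t)))‖
          = |t| * ‖(innerSL ℝ (z - a)).comp (fderiv ℝ p (c z t))‖ := by
        rw [norm_smul t ((innerSL ℝ (z - a)).comp (fderiv ℝ p (c z t))), Real.norm_eq_abs]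
      rw [hns]
      gcongr
      exact ContinuousLinearMap.opNorm_comp_le _ _
    have h2 : ‖innerSL ℝ (z - a)‖ ≤ ‖z - a‖ := (innerSL_apply_norm (𝕜 := ℝ) (x := z - a)).le
    have h3 : ‖innerSL ℝ (p (c z t))‖ ≤ M₁ :=
      (innerSL_apply_norm (𝕜 := ℝ) (x := p (c z t))).le.trans (hM₁ _ hcK)
    have habs : |t| ≤ 1 := by
      rw [abs_le]; constructor <;> linarith [ht'.1, ht'.2]
    have h4 : |t| * (‖innerSL ℝ (z - a)‖ * ‖fderiv ℝ p (c z t)‖) ≤ 1 * ((‖z₀ - a‖ + ε') * M₂) := by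
      have hnn : (0:ℝ) ≤ ‖z₀ - a‖ + ε' := by positivity
      gcongr
      · exact h2.trans hza
      · exact hM₂ _ hcK
    calc ‖F' z t‖ ≤ 1 * ((‖z₀ - a‖ + ε') * M₂) + M₁ := le_trans h1 (by linarith)
      _ = C := by rw [hC]; ring
  -- measurability
  have hmeas : ∀ z ∈ closedBall z₀ ε',
      AEStronglyMeasurable (F z) (volume.restrict (Ι (0:ℝ) 1)) := by
    intro z hz
    exact ((hFcont z hz).aestronglyMeasurable measurableSet_Icc).mono_measure
      (Measure.restrict_mono hIsub le_rfl)
  have hF'meas : AEStronglyMeasurable (F' z₀) (volume.restrict (Ι (0:ℝ) 1)) :=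
    (hF'cont.aestronglyMeasurable measurableSet_Icc).mono_measure
      (Measure.restrict_mono hIsub le_rfl)
  have hFint : IntervalIntegrable (F z₀) volume 0 1 := by
    have := hFcont z₀ (mem_closedBall_self ε'pos.le)
    rw [← Set.uIcc_of_le (zero_le_one (α := ℝ))] at this
    exact this.intervalIntegrable
  have hF'int : IntervalIntegrable (F' z₀) volume 0 1 := by
    have := hF'cont
    rw [← Set.uIcc_of_le (zero_le_one (α := ℝ))] at this
    exact this.intervalIntegrable
  -- differentiation under the integral sign
  have hmain : HasFDerivAt (fun z => ∫ t in (0:ℝ)..1, F z t)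
      (∫ t in (0:ℝ)..1, F' z₀ t) z₀ := by
    apply intervalIntegral.hasFDerivAt_integral_of_dominated_of_fderiv_le
      (hs := ball_mem_nhds z₀ ε'pos) (bound := fun _ => C)
    · filter_upwards [ball_mem_nhds z₀ ε'pos] with z hz
      exact hmeas z (ball_subset_closedBall hz)
    · exact hFint
    · exact hF'meas
    · exact Filter.Eventually.of_forall (fun t ht z hz => hbound t ht z hz)
    · exact intervalIntegrable_const
    · exact Filter.Eventually.of_forall (fun t ht z hz => hFderiv t (hIsub ht) z hz)
  -- compute the integral of F' z₀ via FTC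
  have key : ∀ v, (∫ t in (0:ℝ)..1, F' z₀ t) v = ⟪p z₀, v⟫ := by
    intro v
    rw [ContinuousLinearMap.intervalIntegral_apply hF'int]
    have heq : ∀ t ∈ Set.uIcc (0:ℝ) 1,
        HasDerivAt (fun t => t * ⟪p (c z₀ t), v⟫) (F' z₀ t v) t := by
      intro t ht
      rw [Set.uIcc_of_le zero_le_one] at ht
      have hcz : c z₀ t ∈ U := hcmem z₀ hz₀ t ht
      have hc' : HasDerivAt (fun t : ℝ => c z₀ t) (z₀ - a) t := by
        simpa [hc] using ((hasDerivAt_id t).smul_const (z₀ - a)).const_add a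
      have hpc' : HasDerivAt (fun t => p (c z₀ t)) (fderiv ℝ p (c z₀ t) (z₀ - a)) t :=
        (hpd _ hcz).comp_hasDerivAt t hc'
      have hinner : HasDerivAt (fun t => ⟪p (c z₀ t), v⟫)
          (⟪fderiv ℝ p (c z₀ t) (z₀ - a), v⟫) t := by
        simpa using hpc'.inner ℝ (hasDerivAt_const t v)
      have hmul := (hasDerivAt_id t).fun_mul hinner
      refine hmul.congr_deriv ?_
      rw [hF'apply]
      have hs := hsymm _ hcz v (z₀ - a)
      rw [real_inner_comm ((fderiv ℝ p (c z₀ t)) v) (z₀ - a), hs]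
      simp only [id_eq]
      ring
    have hintv : IntervalIntegrable (fun t => F' z₀ t v) volume 0 1 := by
      have hcont : ContinuousOn (fun t => F' z₀ t v) (Icc (0:ℝ) 1) :=
        hF'cont.clm_apply continuousOn_const
      rw [← Set.uIcc_of_le (zero_le_one (α := ℝ))] at hcont
      exact hcont.intervalIntegrable
    rw [intervalIntegral.integral_eq_sub_of_hasDerivAt heq hintv]
    have : c z₀ 1 = z₀ := by simp [hc]
    rw [this]
    ring
  -- conclude
  rw [hasGradientAt_iff_hasFDerivAt]
  refine hmain.congr_fderiv ?_
  ext v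
  rw [key v]
  simp [InnerProductSpace.toDual_apply_apply]


/-- If `x, q : V → ℝ^m` are smooth, `x` is a smooth diffeomorphism from the
open set `V` onto the convex open set `U`, and the embedding `ι(y) = (x y, q y)` into
`T*ℝ^m = ℝ^m × ℝ^m` pulls the canonical symplectic form back to zero (symmetry condition on
the derivatives), then the image of `ι` is the graph of the differential of a smooth
function `ψ : U → ℝ`, i.e. `q y = ∇ψ (x y)` on `V`. -/
theorem stmt_0 (m : ℕ) (hm : 1 ≤ m)
    (V U : Set (EuclideanSpace ℝ (Fin m)))
    (hV : IsOpen V) (hU : IsOpen U) (hUconv : Convex ℝ U)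
    (x q : EuclideanSpace ℝ (Fin m) → EuclideanSpace ℝ (Fin m))
    (hx : ContDiffOn ℝ (⊤ : ℕ∞) x V) (hq : ContDiffOn ℝ (⊤ : ℕ∞) q V)
    (hbij : Set.BijOn x V U)
    (xinv : EuclideanSpace ℝ (Fin m) → EuclideanSpace ℝ (Fin m))
    (hxinv : ContDiffOn ℝ (⊤ : ℕ∞) xinv U)
    (hleft : ∀ y ∈ V, xinv (x y) = y)
    (hsym : ∀ y ∈ V, ∀ u w : EuclideanSpace ℝ (Fin m),
      ⟪fderiv ℝ q y u, fderiv ℝ x y w⟫ = ⟪fderiv ℝ q y w, fderiv ℝ x y u⟫) :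
    ∃ ψ : EuclideanSpace ℝ (Fin m) → ℝ,
      ContDiffOn ℝ (⊤ : ℕ∞) ψ U ∧ ∀ y ∈ V, q y = gradient ψ (x y) := by
  have h1top : (1 : WithTop ℕ∞) ≤ ((⊤ : ℕ∞) : WithTop ℕ∞) := by exact_mod_cast le_top
  rcases Set.eq_empty_or_nonempty V with hVe | ⟨y₀, hy₀⟩
  · have hUe : U = ∅ := by
      have := hbij.surjOn
      rw [hVe] at this
      simpa [Set.subset_empty_iff] using this
    exact ⟨0, by rw [hUe]; exact (contDiffOn_const (c := (0:ℝ))).mono (Set.empty_subset ∅), by rw [hVe]; simp⟩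
  -- basic facts
  have haU : x y₀ ∈ U := hbij.mapsTo hy₀
  have hmapsTo : Set.MapsTo xinv U V := by
    intro z hz
    obtain ⟨y, hy, rfl⟩ := hbij.surjOn hz
    rw [hleft y hy]; exact hy
  set p : EuclideanSpace ℝ (Fin m) → EuclideanSpace ℝ (Fin m) := fun z => q (xinv z) with hpdef
  have hp : ContDiffOn ℝ (⊤ : ℕ∞) p U := hq.comp hxinv hmapsTo
  have hpx : ∀ y ∈ V, p (x y) = q y := fun y hy => by rw [hpdef]; simp [hleft y hy]
  -- symmetry of the derivative of p
  have hpsym : ∀ z ∈ U, ∀ u w : EuclideanSpace ℝ (Fin m),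
      ⟪fderiv ℝ p z u, w⟫ = ⟪fderiv ℝ p z w, u⟫ := by
    intro z hz u w
    obtain ⟨y, hy, rfl⟩ := hbij.surjOn hz
    have hdx : DifferentiableAt ℝ x y :=
      (hx.differentiableOn (by simp)).differentiableAt (hV.mem_nhds hy)
    have hdp : DifferentiableAt ℝ p (x y) :=
      (hp.differentiableOn (by simp)).differentiableAt (hU.mem_nhds (hbij.mapsTo hy))
    have hdxinv : DifferentiableAt ℝ xinv (x y) :=
      (hxinv.differentiableOn (by simp)).differentiableAt (hU.mem_nhds (hbij.mapsTo hy))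
    -- chain rule: fderiv q y = fderiv p (x y) ∘ fderiv x y
    have hev : q =ᶠ[nhds y] (p ∘ x) := by
      filter_upwards [hV.mem_nhds hy] with y' hy'
      exact (hpx y' hy').symm
    have hchain : fderiv ℝ q y = (fderiv ℝ p (x y)).comp (fderiv ℝ x y) := by
      rw [hev.fderiv_eq, fderiv_comp y hdp hdx]
    -- fderiv x y is surjective
    have hinj : Function.Injective (fderiv ℝ x y) := by
      have hev2 : (fun y' => xinv (x y')) =ᶠ[nhds y] id := by
        filter_upwards [hV.mem_nhds hy] with y' hy'
        exact hleft y' hy'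
      have hcomp : (fderiv ℝ xinv (x y)).comp (fderiv ℝ x y)
          = ContinuousLinearMap.id ℝ _ := by
        rw [← fderiv_comp y hdxinv hdx]
        rw [show (xinv ∘ x) = fun y' => xinv (x y') from rfl, hev2.fderiv_eq, fderiv_id]
      intro u v huv
      have := congrArg (fun L : EuclideanSpace ℝ (Fin m) →L[ℝ] EuclideanSpace ℝ (Fin m)
        => L u) hcomp
      have h2 := congrArg (fun L : EuclideanSpace ℝ (Fin m) →L[ℝ] EuclideanSpace ℝ (Fin m)
        => L v) hcomp
      simp only [ContinuousLinearMap.comp_apply, ContinuousLinearMap.id_apply] at this h2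
      rw [← this, ← h2, huv]
    have hsurj : Function.Surjective (fderiv ℝ x y) := by
      have := (LinearMap.injective_iff_surjective
        (f := (fderiv ℝ x y : EuclideanSpace ℝ (Fin m) →ₗ[ℝ] EuclideanSpace ℝ (Fin m)))).1 hinj
      exact this
    obtain ⟨u', hu'⟩ := hsurj u
    obtain ⟨w', hw'⟩ := hsurj w
    have := hsym y hy u' w'
    rw [hchain] at this
    simp only [ContinuousLinearMap.comp_apply] at this
    rw [hu', hw'] at this
    exact this
  -- apply the Poincaré lemma
  set ψ : EuclideanSpace ℝ (Fin m) → ℝ :=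
    fun z => ∫ t in (0:ℝ)..1, ⟪p (x y₀ + t • (z - x y₀)), z - x y₀⟫ with hψdef
  have hgrad : ∀ z ∈ U, HasGradientAt ψ (p z) z :=
    poincare1form hU hUconv hp hpsym haU
  refine ⟨ψ, ?_, ?_⟩
  · rw [contDiffOn_infty_iff_fderivWithin hU.uniqueDiffOn]
    constructor
    · exact fun z hz => ((hgrad z hz).differentiableAt).differentiableWithinAt
    · apply ContDiffOn.congr ((innerSL ℝ).contDiff.comp_contDiffOn hp)
      intro z hz
      have h1 : fderivWithin ℝ ψ U z = fderiv ℝ ψ z := fderivWithin_of_isOpen hU hz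
      have h2 : HasFDerivAt ψ ((InnerProductSpace.toDual ℝ _) (p z)) z :=
        hasGradientAt_iff_hasFDerivAt.1 (hgrad z hz)
      rw [h1, h2.fderiv]
      ext v
      simp only [InnerProductSpace.toDual_apply_apply, innerSL_apply_apply, Function.comp_apply]
      rfl
  · intro y hy
    have := (hgrad (x y) (hbij.mapsTo hy)).gradient
    rw [this, hpx y hy]
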